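/- Let G be a finite abelian group, H a subgroup of G, and C > 0 a fixed constant. For all sufficiently large n the following holds: if n̄ ∈ B(n,H) and there exists a ∈ G_+ with (−a+H) ∩ G_+ = ∅, then D(ν_{n̄}‖μ_{n̄}) ≥ (log n)/(2n). -/

import Mathlib

open scoped Classical

noncomputable section

namespace CLPaper

open Matrix

/-- The matrix `B_n`: rows indexed by `[n]³`, columns by `[n]`;
the row of `(x₁,x₂,x₃)` is `e_{x₁} + e_{x₂} + e_{x₃}`. -/
def B (n : ℕ) : Matrix (Fin n × Fin n × Fin n) (Fin n) ℤ :=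
  fun x j => (if x.1 = j then 1 else 0) + (if x.2.1 = j then 1 else 0) +
    (if x.2.2 = j then 1 else 0)

/-- `det (B_n[K])` for an `n`-element subset `K` of `[n]³` (rows enumerated by a fixed
bijection; the quantities we consider do not depend on this choice), `0` otherwise. -/
def subdet (n : ℕ) (K : Finset (Fin n × Fin n × Fin n)) : ℤ :=
  if h : K.card = n then
    ((B n).submatrix
      (fun i : Fin n => ((K.equivFin.symm (Fin.cast h.symm i)) : Fin n × Fin n × Fin n))
      id).det
  else 0

/-- The cokernel `ℤ^n / (row span of the rows of `B_n` indexed by `K`)`. -/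
def cokK (n : ℕ) (K : Finset (Fin n × Fin n × Fin n)) : Type :=
  (Fin n → ℤ) ⧸ Submodule.span ℤ ((fun x => B n x) '' (K : Set (Fin n × Fin n × Fin n)))

instance (n : ℕ) (K : Finset (Fin n × Fin n × Fin n)) : AddCommGroup (cokK n K) :=
  inferInstanceAs (AddCommGroup ((Fin n → ℤ) ⧸ Submodule.span ℤ _))

/-- The `p`-Sylow subgroup of an abelian group: the subgroup of elements annihilated
by a power of `p`. -/
def sylow (p : ℕ) (A : Type*) [AddCommGroup A] : AddSubgroup A where
  carrier := {x | ∃ k : ℕ, p ^ k • x = 0}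
  zero_mem' := ⟨0, by simp⟩
  add_mem' := by
    rintro x y ⟨k, hk⟩ ⟨l, hl⟩
    refine ⟨k + l, ?_⟩
    rw [smul_add, pow_add, mul_comm, mul_smul, hk, smul_zero, mul_comm, mul_smul, hl,
      smul_zero, add_zero]
  neg_mem' := by
    rintro x ⟨k, hk⟩
    exact ⟨k, by rw [smul_neg, hk, neg_zero]⟩

/-- Number of surjective homomorphisms from `A` to `G`. -/
def numSur (A G : Type*) [AddCommGroup A] [AddCommGroup G] : ℕ :=
  Nat.card {f : A →+ G // Function.Surjective f}

variable {G : Type*} [AddCommGroup G] [Fintype G]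

/-- The submatrix `B_{n,q}` of `B_n` consisting of the rows indexed by
`I_q = {(x₁,x₂,x₃) : q_{x₁} + q_{x₂} + q_{x₃} = 0}`. -/
def Bq (n : ℕ) (q : Fin n → G) :
    Matrix {x : Fin n × Fin n × Fin n // q x.1 + q x.2.1 + q x.2.2 = 0} (Fin n) ℤ :=
  fun x j => B n x.1 j

/-- The Gram matrix `B_{n,q}ᵀ B_{n,q}`. -/
def gram (n : ℕ) (q : Fin n → G) : Matrix (Fin n) (Fin n) ℤ :=
  (Bq n q)ᵀ * Bq n q

/-- `n_a(q) = #{i : q_i = a}`. -/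
def cnt {n : ℕ} (q : Fin n → G) (a : G) : ℕ :=
  (Finset.univ.filter (fun i => q i = a)).card

/-- `m_a = ∑_b n_b n_{-a-b}` associated to a counts vector `n̄ : G → ℕ`. -/
def mOf (nbar : G → ℕ) (a : G) : ℕ :=
  ∑ b : G, nbar b * nbar (-a - b)

/-- The matrix `M` indexed by `G₊ = {a : n_a > 0}`, with
`M(a,a) = 2 n_a n_{-2a} + m_a` and `M(a,b) = 2 √(n_a n_b) n_{-a-b}` for `a ≠ b`. -/
def Mmat (nbar : G → ℕ) :
    Matrix {a : G // 0 < nbar a} {a : G // 0 < nbar a} ℝ :=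
  fun a b =>
    if (a : G) = (b : G) then
      2 * (nbar (a : G) : ℝ) * (nbar (-(2 • (a : G))) : ℝ) + (mOf nbar (a : G) : ℝ)
    else
      2 * Real.sqrt ((nbar (a : G) : ℝ) * (nbar (b : G) : ℝ)) * (nbar (-(a : G) - b) : ℝ)

/-- The set `S(n̄)` of vectors `q ∈ G^n` with the prescribed counts. -/
def Sset (n : ℕ) (nbar : G → ℕ) : Finset (Fin n → G) :=
  Finset.univ.filter (fun q => ∀ a : G, cnt q a = nbar a)

/-- `E(n̄) = ∑_{q ∈ S(n̄)} det(B_{n,q}ᵀ B_{n,q}) / (3^{n+1} n^{2n})`. -/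
def Eval (n : ℕ) (nbar : G → ℕ) : ℝ :=
  (∑ q ∈ Sset n nbar, ((gram n q).det : ℝ)) / ((3 : ℝ) ^ (n + 1) * (n : ℝ) ^ (2 * n))

/-- Kullback–Leibler divergence of two probability vectors on `G` (natural log;
terms with `ν a = 0` contribute `0`). -/
def klDiv (ν μ : G → ℝ) : ℝ :=
  ∑ a : G, if ν a = 0 then 0 else ν a * Real.log (ν a / μ a)

/-- `ν_{n̄}(a) = n_a / n`. -/
def nuOf (n : ℕ) (nbar : G → ℕ) : G → ℝ := fun a => (nbar a : ℝ) / n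

/-- `μ_{n̄}(a) = m_a / n²`. -/
def muOf (n : ℕ) (nbar : G → ℕ) : G → ℝ := fun a => (mOf nbar a : ℝ) / (n : ℝ) ^ 2

/-- `t_n = 2C √(|G| n log n)`. -/
def tSeq (G : Type*) [Fintype G] (C : ℝ) (n : ℕ) : ℝ :=
  2 * C * Real.sqrt ((Fintype.card G) * n * Real.log n)

/-- `r_n = 4C |G| log n`. -/
def rSeq (G : Type*) [Fintype G] (C : ℝ) (n : ℕ) : ℝ :=
  4 * C * (Fintype.card G) * Real.log n

/-- `n̄ ∈ D_n`: the counts sum to `n` and the support generates `G`. -/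
def memD (n : ℕ) (nbar : G → ℕ) : Prop :=
  (∑ a : G, nbar a = n) ∧ AddSubgroup.closure {a : G | 0 < nbar a} = ⊤

/-- `n̄ ∈ D_n'`: moreover `m_a > 0` for all `a ∈ G₊`. -/
def memD' (n : ℕ) (nbar : G → ℕ) : Prop :=
  memD n nbar ∧ ∀ a : G, 0 < nbar a → 0 < mOf nbar a

/-- `u_H(g) = 1/|H|` for `g ∈ H` and `0` otherwise. -/
def uH (H : AddSubgroup G) : G → ℝ :=
  fun g => if g ∈ H then (Nat.card H : ℝ)⁻¹ else 0

/-- `n̄ ∈ B(n,H)`. -/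
def memB (C : ℝ) (n : ℕ) (H : AddSubgroup G) (nbar : G → ℕ) : Prop :=
  memD' n nbar ∧ (∀ a : G, |(nbar a : ℝ) - n * uH H a| ≤ tSeq G C n) ∧
    (∑ a ∈ Finset.univ.filter (fun a : G => a ∉ H), (nbar a : ℝ)) ≤ rSeq G C n

end CLPaper

open CLPaper

/-- **Lemma (extra log).** For large `n`, if `n̄ ∈ B(n,H)` and some `a ∈ G₊` has
`(-a+H) ∩ G₊ = ∅`, then `D(ν_{n̄}‖μ_{n̄}) ≥ log n / (2n)`. -/
lemma sum_mOf_eq {G : Type*} [AddCommGroup G] [Fintype G] (nbar : G → ℕ) :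
    ∑ a : G, mOf nbar a = (∑ a : G, nbar a) ^ 2 := by
  have key : ∀ b : G, ∑ a : G, nbar (-a - b) = ∑ a : G, nbar a := by
    intro b
    apply Fintype.sum_equiv (Equiv.subLeft (-b))
    intro a
    congr 1
    simp [Equiv.subLeft]
    abel
  calc ∑ a : G, mOf nbar a = ∑ a : G, ∑ b : G, nbar b * nbar (-a - b) := rfl
    _ = ∑ b : G, ∑ a : G, nbar b * nbar (-a - b) := Finset.sum_comm
    _ = ∑ b : G, nbar b * ∑ a : G, nbar (-a - b) := by
        simp [Finset.mul_sum]
    _ = ∑ b : G, nbar b * ∑ a : G, nbar a := by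
        refine Finset.sum_congr rfl fun b _ => by rw [key b]
    _ = (∑ a : G, nbar a) ^ 2 := by rw [← Finset.sum_mul]; ring

set_option maxHeartbeats 1600000 in
theorem klDiv_ge_of_empty_coset (G : Type*) [AddCommGroup G] [Fintype G]
    (H : AddSubgroup G) (C : ℝ) (hC : 0 < C) :
    ∃ N : ℕ, ∀ n ≥ N, ∀ nbar : G → ℕ, memB C n H nbar →
      (∃ a : G, 0 < nbar a ∧ ∀ b : G, 0 < nbar b → b + a ∉ H) →
      klDiv (nuOf n nbar) (muOf n nbar) ≥ Real.log n / (2 * n) := by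
  set c : ℝ := |Real.log (4 * C * (Fintype.card G))| with hc
  set K : ℝ := max 256 (8 * c + 4) with hK
  have htend : Filter.Tendsto (fun n : ℕ => Real.log n) Filter.atTop Filter.atTop :=
    Real.tendsto_log_atTop.comp tendsto_natCast_atTop_atTop
  obtain ⟨N, hN⟩ := Filter.eventually_atTop.mp (htend.eventually_ge_atTop K)
  refine ⟨N, fun n hn nbar hmem ⟨a, ha, hcos⟩ => ?_⟩
  have hLK : K ≤ Real.log n := hN n hn
  set L : ℝ := Real.log n with hLdef
  have hL256 : (256 : ℝ) ≤ L := le_trans (le_max_left _ _) hLK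
  have hLc : 8 * c + 4 ≤ L := le_trans (le_max_right _ _) hLK
  have hLpos : (0 : ℝ) < L := by linarith
  have hn1 : (1 : ℝ) < (n : ℝ) := by
    by_contra h
    push_neg at h
    have := Real.log_nonpos (by positivity) h
    rw [← hLdef] at this; linarith
  have hnpos : (0 : ℝ) < (n : ℝ) := by linarith
  obtain ⟨⟨⟨hsum, _⟩, hm⟩, _, hrH⟩ := hmem
  have hma : 0 < mOf nbar a := hm a ha
  have hcard : (0 : ℝ) < (Fintype.card G : ℝ) := by
    exact_mod_cast Fintype.card_pos
  set r : ℝ := rSeq G C n with hrdef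
  have hrval : r = 4 * C * (Fintype.card G) * L := rfl
  have hrpos : (0 : ℝ) < r := by rw [hrval]; positivity
  set S : ℕ := ∑ b ∈ Finset.univ.filter (fun b : G => b ∉ H), nbar b with hSdef
  have hSr : (S : ℝ) ≤ r := by
    rw [hSdef]
    push_cast
    exact hrH
  -- m_a ≤ S * S
  have hmS : mOf nbar a ≤ S * S := by
    have h1 : mOf nbar a
        = ∑ b ∈ Finset.univ.filter (fun b : G => b ∉ H), nbar b * nbar (-a - b) := by
      rw [mOf]
      refine (Finset.sum_subset (Finset.filter_subset _ _) ?_).symm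
      intro b _ hb
      simp only [Finset.mem_filter, Finset.mem_univ, true_and, not_not] at hb
      by_contra hne
      have hb1 : 0 < nbar b := Nat.pos_of_ne_zero fun h => hne (by simp [h])
      have hb2 : 0 < nbar (-a - b) := Nat.pos_of_ne_zero fun h => hne (by simp [h])
      have h3 := hcos (-a - b) hb2
      have h4 : -a - b + a = -b := by abel
      rw [h4] at h3
      exact h3 (neg_mem hb)
    rw [h1]
    calc ∑ b ∈ Finset.univ.filter (fun b : G => b ∉ H), nbar b * nbar (-a - b)
        ≤ ∑ b ∈ Finset.univ.filter (fun b : G => b ∉ H), nbar b * S := by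
          refine Finset.sum_le_sum fun b _ => ?_
          rcases Nat.eq_zero_or_pos (nbar b) with h0 | hbpos
          · simp [h0]
          rcases Nat.eq_zero_or_pos (nbar (-a - b)) with h0 | hcpos
          · simp [h0, Nat.zero_le]
          refine Nat.mul_le_mul_left _ ?_
          have hnot : (-a - b) ∉ H := by
            intro hmem'
            have h5 := hcos b hbpos
            have h6 : -(-a - b) = b + a := by abel
            have := neg_mem hmem'
            rw [h6] at this
            exact h5 this
          exact Finset.single_le_sum (f := fun c => nbar c)
            (fun _ _ => Nat.zero_le _) (by simp [hnot])
      _ = S * S := by rw [← Finset.sum_mul, ← hSdef, Nat.mul_comm]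
  have hmr : (mOf nbar a : ℝ) ≤ r ^ 2 := by
    have : (mOf nbar a : ℝ) ≤ (S : ℝ) * (S : ℝ) := by exact_mod_cast hmS
    nlinarith [hSr, (Nat.cast_nonneg S : (0:ℝ) ≤ (S:ℝ))]
  have hmpos : (0 : ℝ) < (mOf nbar a : ℝ) := by exact_mod_cast hma
  -- probability sums
  have hsumR : (∑ b : G, (nbar b : ℝ)) = (n : ℝ) := by exact_mod_cast hsum
  have hν1 : ∑ b : G, nuOf n nbar b = 1 := by
    simp only [nuOf, ← Finset.sum_div, hsumR]
    field_simp
  have hμ1 : ∑ b : G, muOf n nbar b = 1 := by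
    simp only [muOf, ← Finset.sum_div]
    have : (∑ b : G, (mOf nbar b : ℝ)) = (n : ℝ) ^ 2 := by
      have := sum_mOf_eq nbar
      rw [hsum] at this
      exact_mod_cast this
    rw [this]
    field_simp
  -- split off the term at a
  have hsplit : klDiv (nuOf n nbar) (muOf n nbar)
      = (if nuOf n nbar a = 0 then 0 else nuOf n nbar a *
          Real.log (nuOf n nbar a / muOf n nbar a))
        + ∑ b ∈ Finset.univ.erase a, (if nuOf n nbar b = 0 then 0
            else nuOf n nbar b * Real.log (nuOf n nbar b / muOf n nbar b)) := by
    rw [klDiv, ← Finset.add_sum_erase _ _ (Finset.mem_univ a)]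
  have hνa : nuOf n nbar a ≠ 0 := by
    have : (0:ℝ) < (nbar a : ℝ) := by exact_mod_cast ha
    have : 0 < nuOf n nbar a := div_pos this hnpos
    linarith
  have hνapos : 0 < nuOf n nbar a := lt_of_le_of_ne (by
      exact div_nonneg (Nat.cast_nonneg _) hnpos.le) (Ne.symm hνa)
  -- bound the rest
  have hrest : ∑ b ∈ Finset.univ.erase a, (if nuOf n nbar b = 0 then 0
        else nuOf n nbar b * Real.log (nuOf n nbar b / muOf n nbar b))
      ≥ ∑ b ∈ Finset.univ.erase a, (nuOf n nbar b - muOf n nbar b) := by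
    refine Finset.sum_le_sum fun b _ => ?_
    by_cases h0 : nuOf n nbar b = 0
    · simp only [h0, if_pos]
      have : 0 ≤ muOf n nbar b := div_nonneg (Nat.cast_nonneg _) (by positivity)
      simp [h0]; linarith
    · simp only [h0, if_neg, ite_false]
      have hνb : 0 < nuOf n nbar b :=
        lt_of_le_of_ne (div_nonneg (Nat.cast_nonneg _) hnpos.le) (Ne.symm h0)
      have hnb : 0 < nbar b :=
        Nat.pos_of_ne_zero fun h => h0 (by simp [nuOf, h])
      have hμb : 0 < muOf n nbar b := by
        have := hm b hnb
        have : (0:ℝ) < (mOf nbar b : ℝ) := by exact_mod_cast this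
        exact div_pos this (by positivity)
      have hlog := Real.log_le_sub_one_of_pos (div_pos hμb hνb)
      have hloginv : Real.log (nuOf n nbar b / muOf n nbar b)
          = -Real.log (muOf n nbar b / nuOf n nbar b) := by
        rw [← Real.log_inv, inv_div]
      rw [hloginv, mul_neg]
      have h2 := mul_le_mul_of_nonneg_left hlog hνb.le
      have h3 : nuOf n nbar b * (muOf n nbar b / nuOf n nbar b - 1)
          = muOf n nbar b - nuOf n nbar b := by
        field_simp
      linarith
  have herased_ν : ∑ b ∈ Finset.univ.erase a, nuOf n nbar b = 1 - nuOf n nbar a := by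
    have := Finset.add_sum_erase Finset.univ (nuOf n nbar) (Finset.mem_univ a)
    rw [hν1] at this
    linarith
  have herased_μ : ∑ b ∈ Finset.univ.erase a, muOf n nbar b = 1 - muOf n nbar a := by
    have := Finset.add_sum_erase Finset.univ (muOf n nbar) (Finset.mem_univ a)
    rw [hμ1] at this
    linarith
  have hrest2 : ∑ b ∈ Finset.univ.erase a, (nuOf n nbar b - muOf n nbar b)
      = muOf n nbar a - nuOf n nbar a := by
    rw [Finset.sum_sub_distrib, herased_ν, herased_μ]
    ring
  -- the main term
  have hratio_eq : nuOf n nbar a / muOf n nbar a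
      = (nbar a : ℝ) * (n : ℝ) / (mOf nbar a : ℝ) := by
    rw [nuOf, muOf]
    field_simp
  have hratio_ge : (n : ℝ) / r ^ 2 ≤ nuOf n nbar a / muOf n nbar a := by
    rw [hratio_eq]
    have h1 : (n : ℝ) / r ^ 2 ≤ (n : ℝ) / (mOf nbar a : ℝ) := by gcongr
    have h2 : (n : ℝ) / (mOf nbar a : ℝ) ≤ (nbar a : ℝ) * (n : ℝ) / (mOf nbar a : ℝ) := by
      have hna1 : (1:ℝ) ≤ (nbar a : ℝ) := by exact_mod_cast ha
      have : (n : ℝ) ≤ (nbar a : ℝ) * (n : ℝ) := by nlinarith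
      gcongr
    linarith
  -- log r bound
  have hlogr : Real.log r ≤ c + L / 8 := by
    have h1 : Real.log r = Real.log (4 * C * (Fintype.card G)) + Real.log L := by
      rw [hrval, Real.log_mul (by positivity) (ne_of_gt hLpos)]
    have hsqrtpos : (0:ℝ) < Real.sqrt L := Real.sqrt_pos.mpr hLpos
    have h2 : Real.log L = 2 * Real.log (Real.sqrt L) := by
      rw [Real.log_sqrt hLpos.le]; ring
    have h3 : Real.log (Real.sqrt L) ≤ Real.sqrt L - 1 :=
      Real.log_le_sub_one_of_pos hsqrtpos
    have h4 : (16:ℝ) ≤ Real.sqrt L := by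
      have : Real.sqrt 256 ≤ Real.sqrt L := Real.sqrt_le_sqrt hL256
      rw [show (256:ℝ) = 16 ^ 2 by norm_num, Real.sqrt_sq (by norm_num)] at this
      exact this
    have h5 : Real.sqrt L * Real.sqrt L = L := Real.mul_self_sqrt hLpos.le
    have h6 : Real.sqrt L ≤ L / 16 := by
      have : Real.sqrt L * 16 ≤ L := by nlinarith
      linarith
    have h7 : Real.log (4 * C * (Fintype.card G)) ≤ c := le_abs_self _
    rw [h1]
    nlinarith
  have hlogmain : Real.log (nuOf n nbar a / muOf n nbar a) ≥ L / 2 + 1 := by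
    have hpos : (0:ℝ) < (n : ℝ) / r ^ 2 := by positivity
    have h1 : Real.log ((n : ℝ) / r ^ 2) ≤ Real.log (nuOf n nbar a / muOf n nbar a) :=
      Real.log_le_log hpos hratio_ge
    have h2 : Real.log ((n : ℝ) / r ^ 2) = L - 2 * Real.log r := by
      rw [Real.log_div (ne_of_gt hnpos) (by positivity), Real.log_pow]
      push_cast
      ring
    have h3 : L - 2 * Real.log r ≥ L / 2 + 1 := by
      nlinarith [hlogr, hLc]
    linarith
  have hνa_ge : (1:ℝ) / n ≤ nuOf n nbar a := by
    rw [nuOf]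
    gcongr
    exact_mod_cast ha
  have hterm : (if nuOf n nbar a = 0 then 0 else nuOf n nbar a *
      Real.log (nuOf n nbar a / muOf n nbar a)) ≥ nuOf n nbar a * (L / 2 + 1) := by
    rw [if_neg hνa]
    exact mul_le_mul_of_nonneg_left hlogmain hνapos.le
  have hμa_nonneg : 0 ≤ muOf n nbar a := div_nonneg (Nat.cast_nonneg _) (by positivity)
  have hfinal : klDiv (nuOf n nbar) (muOf n nbar) ≥ nuOf n nbar a * (L / 2) := by
    rw [hsplit]
    have := hrest
    rw [hrest2] at this
    nlinarith [hterm, this, hμa_nonneg, hνapos]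
  have hlast : nuOf n nbar a * (L / 2) ≥ L / (2 * n) := by
    have : (1:ℝ) / n * (L / 2) ≤ nuOf n nbar a * (L / 2) := by
      apply mul_le_mul_of_nonneg_right hνa_ge (by linarith)
    calc L / (2 * n) = 1 / n * (L / 2) := by rw [div_mul_div_comm, one_mul, mul_comm]
      _ ≤ _ := this
  linarith
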